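/- Let σ be a real symmetric positive definite 2×2 matrix. The pair (ν₁, ν₂) with ν₁ = (σ₂₂ − σ₁₁ − 2iσ₁₂)/(1 + tr σ + det σ) ∈ ℂ and ν₂ = (1 − det σ)/(1 + tr σ + det σ) ∈ ℝ uniquely determines σ: if two symmetric positive definite 2×2 matrices σ and σ' give the same pair (ν₁, ν₂), then σ = σ'. -/

import Mathlib

open Matrix

lemma pos_aux (a b c : ℝ)
    (hpd : (!![a, b; b, c] : Matrix (Fin 2) (Fin 2) ℝ).PosDef) :
    0 < a ∧ 0 < c ∧ 0 < a * c - b ^ 2 := by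
  have hdet := hpd.det_pos
  rw [Matrix.det_fin_two_of] at hdet
  have ha := hpd.dotProduct_mulVec_pos (x := ![1, 0]) (by simp [Function.ne_iff])
  have hc := hpd.dotProduct_mulVec_pos (x := ![0, 1]) (by simp [Function.ne_iff])
  simp [Matrix.mulVec, dotProduct, Fin.sum_univ_two] at ha hc
  refine ⟨by linarith, by linarith, by nlinarith⟩

theorem nu_determines_sigma (s11 s12 s22 s11' s12' s22' : ℝ)
    (hpd : (!![s11, s12; s12, s22] : Matrix (Fin 2) (Fin 2) ℝ).PosDef)
    (hpd' : (!![s11', s12'; s12', s22'] : Matrix (Fin 2) (Fin 2) ℝ).PosDef)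
    (hν1 : ((s22 - s11 : ℝ) - 2 * (s12 : ℂ) * Complex.I) /
        ((1 + (s11 + s22) + (s11 * s22 - s12 ^ 2) : ℝ) : ℂ)
      = ((s22' - s11' : ℝ) - 2 * (s12' : ℂ) * Complex.I) /
        ((1 + (s11' + s22') + (s11' * s22' - s12' ^ 2) : ℝ) : ℂ))
    (hν2 : (1 - (s11 * s22 - s12 ^ 2)) / (1 + (s11 + s22) + (s11 * s22 - s12 ^ 2))
      = (1 - (s11' * s22' - s12' ^ 2)) / (1 + (s11' + s22') + (s11' * s22' - s12' ^ 2))) :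
    (!![s11, s12; s12, s22] : Matrix (Fin 2) (Fin 2) ℝ) = !![s11', s12'; s12', s22'] := by
  obtain ⟨h11, h22, hdet⟩ := pos_aux s11 s12 s22 hpd
  obtain ⟨h11', h22', hdet'⟩ := pos_aux s11' s12' s22' hpd'
  set D : ℝ := 1 + (s11 + s22) + (s11 * s22 - s12 ^ 2) with hDdef
  set D' : ℝ := 1 + (s11' + s22') + (s11' * s22' - s12' ^ 2) with hD'def
  have hD : 0 < D := by positivity
  have hD' : 0 < D' := by positivity
  rw [div_eq_div_iff (by exact_mod_cast hD.ne') (by exact_mod_cast hD'.ne')] at hν1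
  rw [div_eq_div_iff hD.ne' hD'.ne'] at hν2
  have hre := congrArg Complex.re hν1
  have him := congrArg Complex.im hν1
  simp [Complex.mul_re, Complex.mul_im] at hre him
  -- hre : (s22 - s11) * D' = (s22' - s11') * D
  -- him : -(2 * s12 * D') = -(2 * s12' * D) (roughly)
  have E1 : (s22 - s11) * D' = (s22' - s11') * D := hre
  have E2 : s12 * D' = s12' * D := by linarith [him]
  have E3 : (1 - (s11 * s22 - s12 ^ 2)) * D' = (1 - (s11' * s22' - s12' ^ 2)) * D := hν2
  rw [hDdef, hD'def] at E1 E2 E3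
  have hA : (1 + s11) * D' = (1 + s11') * D := by
    rw [hDdef, hD'def]
    linear_combination E3 / 2 - E1 / 2
  have hB : (1 + s22) * D' = (1 + s22') * D := by
    rw [hDdef, hD'def]
    linear_combination E3 / 2 + E1 / 2
  have key : D * D' ^ 2 = D' * D ^ 2 := by
    rw [hDdef, hD'def] at hA hB ⊢
    linear_combination (1 + s22) * (1 + (s11' + s22') + (s11' * s22' - s12' ^ 2)) * hA
      + (1 + s11') * (1 + (s11 + s22) + (s11 * s22 - s12 ^ 2)) * hB
      - (s12 * (1 + (s11' + s22') + (s11' * s22' - s12' ^ 2))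
        + s12' * (1 + (s11 + s22) + (s11 * s22 - s12 ^ 2))) * E2
  have hDD : D' = D := by
    have h0 : D * D' ≠ 0 := by positivity
    exact mul_left_cancel₀ h0 (by linear_combination key)
  rw [hDD] at hA hB
  have hDDexp : (1 + (s11' + s22') + (s11' * s22' - s12' ^ 2))
      = (1 + (s11 + s22) + (s11 * s22 - s12 ^ 2)) := by
    rw [← hDdef, ← hD'def]; exact hDD
  rw [hDDexp] at E2
  have hDne : (1 + (s11 + s22) + (s11 * s22 - s12 ^ 2)) ≠ 0 := by
    rw [← hDdef]; exact hD.ne'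
  have e11 : s11 = s11' := by
    have := mul_right_cancel₀ hD.ne' hA; linarith
  have e22 : s22 = s22' := by
    have := mul_right_cancel₀ hD.ne' hB; linarith
  have e12 : s12 = s12' := mul_right_cancel₀ hDne E2
  rw [e11, e12, e22]
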